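/- Let R be a commutative ring, fix m attributes with finite domains D a for a : Fin m, Tup := Π (a : Fin m), D a, one-dimensional variables x : Π (a : Fin m), D a → R, a finite type K of multi-dimensional statistics with per-attribute decidable membership predicates ρ j a ⊆ D a for j : K and a : Fin m, the conjunctive predicate π j t := ∀ a, t a ∈ ρ j a, multi-dimensional variables δ : K → R, and P := Σ_{t : Tup} (∏_a x a (t a)) · ∏ over those j : K with π j t of δ j. Then P = Σ over all finite subsets S ⊆ K of (∏_{j ∈ S} (δ j − 1)) · ∏_{a : Fin m} (Σ over those v ∈ D a with v ∈ ρ j a for all j ∈ S of x a v). -/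
import Mathlib


/-- The core inclusion–exclusion identity underlying the compression of the
MaxEnt data summary:
`∑_t (∏_a x a (t a)) · ∏_{j : π j t} δ j
  = ∑_{S ⊆ K} (∏_{j ∈ S} (δ j − 1)) · ∏_a (∑_{v : ∀ j ∈ S, v ∈ ρ j a} x a v)`. -/
theorem stmt_12 (R : Type*) [CommRing R] (m : ℕ) (D : Fin m → Type*)
    [∀ a, Fintype (D a)] [∀ a, DecidableEq (D a)]
    (x : ∀ a : Fin m, D a → R)
    (K : Type*) [Fintype K] [DecidableEq K]
    (ρ : K → ∀ a : Fin m, Finset (D a)) (δ : K → R) :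
    ∑ t : ∀ a : Fin m, D a,
        (∏ a : Fin m, x a (t a)) *
          ∏ j ∈ Finset.univ.filter (fun j : K => ∀ a : Fin m, t a ∈ ρ j a), δ j =
      ∑ S : Finset K,
        (∏ j ∈ S, (δ j - 1)) *
          ∏ a : Fin m,
            ∑ v ∈ Finset.univ.filter (fun v : D a => ∀ j ∈ S, v ∈ ρ j a), x a v := by
  classical
  have key : ∀ t : ∀ a : Fin m, D a,
      ∏ j ∈ Finset.univ.filter (fun j : K => ∀ a : Fin m, t a ∈ ρ j a), δ j
        = ∑ S : Finset K,
            if (∀ j ∈ S, ∀ a : Fin m, t a ∈ ρ j a) then ∏ j ∈ S, (δ j - 1) else 0 := by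
    intro t
    set T := Finset.univ.filter (fun j : K => ∀ a : Fin m, t a ∈ ρ j a) with hT
    have h1 : ∏ j ∈ T, δ j = ∏ j ∈ T, ((δ j - 1) + 1) := by
      apply Finset.prod_congr rfl; intro j _; ring
    rw [h1, Finset.prod_add]
    have hpw : T.powerset = Finset.univ.filter (fun S : Finset K => S ⊆ T) := by
      ext S; simp [Finset.mem_powerset]
    rw [hpw, Finset.sum_filter]
    apply Finset.sum_congr rfl
    intro S _
    have hsub : (S ⊆ T) ↔ (∀ j ∈ S, ∀ a : Fin m, t a ∈ ρ j a) := by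
      constructor
      · intro h j hj
        have := h hj
        rw [hT, Finset.mem_filter] at this
        exact this.2
      · intro h j hj
        rw [hT, Finset.mem_filter]
        exact ⟨Finset.mem_univ _, h j hj⟩
    simp [hsub]
  calc
    ∑ t : ∀ a : Fin m, D a,
        (∏ a : Fin m, x a (t a)) *
          ∏ j ∈ Finset.univ.filter (fun j : K => ∀ a : Fin m, t a ∈ ρ j a), δ j
      = ∑ t : ∀ a : Fin m, D a, ∑ S : Finset K,
          (∏ a : Fin m, x a (t a)) *
            (if (∀ j ∈ S, ∀ a : Fin m, t a ∈ ρ j a) then ∏ j ∈ S, (δ j - 1) else 0) := by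
        apply Finset.sum_congr rfl; intro t _
        rw [key t, Finset.mul_sum]
    _ = ∑ S : Finset K, ∑ t : ∀ a : Fin m, D a,
          (∏ a : Fin m, x a (t a)) *
            (if (∀ j ∈ S, ∀ a : Fin m, t a ∈ ρ j a) then ∏ j ∈ S, (δ j - 1) else 0) :=
        Finset.sum_comm
    _ = _ := by
        apply Finset.sum_congr rfl
        intro S _
        have hprod : ∏ a : Fin m,
            ∑ v ∈ Finset.univ.filter (fun v : D a => ∀ j ∈ S, v ∈ ρ j a), x a v
            = ∑ t ∈ Fintype.piFinset
                (fun a : Fin m => Finset.univ.filter (fun v : D a => ∀ j ∈ S, v ∈ ρ j a)),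
                ∏ a : Fin m, x a (t a) := by
          rw [Finset.prod_univ_sum]
        rw [hprod, Finset.mul_sum]
        have hset : Fintype.piFinset
            (fun a : Fin m => Finset.univ.filter (fun v : D a => ∀ j ∈ S, v ∈ ρ j a))
            = Finset.univ.filter (fun t : ∀ a : Fin m, D a =>
                ∀ j ∈ S, ∀ a : Fin m, t a ∈ ρ j a) := by
          ext t
          simp only [Fintype.mem_piFinset, Finset.mem_filter, Finset.mem_univ, true_and]
          constructor
          · intro h j hj a; exact h a j hj
          · intro h a j hj; exact h j hj a
        rw [hset, Finset.sum_filter]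
        apply Finset.sum_congr rfl
        intro t _
        by_cases h : ∀ j ∈ S, ∀ a : Fin m, t a ∈ ρ j a <;> simp [h, mul_comm]
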